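/- Let γ be a closed polygonal path with at most 4 sides avoiding a point p not lying on any of the lines containing the sides. Then the winding number of γ around p is at most 1 in absolute value. -/

import Mathlib

open Complex intervalIntegral in
/-- Integral of `dz/z` along a segment from `a` to `b` not meeting the line through `0`. -/
lemma seg_key (a b : ℂ) (h : ¬ Collinear ℝ ({0, a, b} : Set ℂ)) :
    ∃ (L : ℂ) (k : ℤ),
      (∫ t in (0:ℝ)..1, (b - a) / (a + (t : ℂ) * (b - a))) = L ∧
      |L.im| < Real.pi ∧
      L = Complex.log b - Complex.log a + k * (2 * Real.pi * Complex.I) := by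
  set d : ℂ := b - a with hd_def
  have h0mem : (0 : ℂ) ∈ ({0, a, b} : Set ℂ) := by simp
  have hcol_of : ∀ v : ℂ, (∃ r : ℝ, a = r • v + 0) → (∃ r : ℝ, b = r • v + 0) → False := by
    intro v ⟨r, hr⟩ ⟨s, hs⟩
    apply h
    rw [collinear_iff_of_mem h0mem]
    refine ⟨v, ?_⟩
    rintro q hq
    rcases hq with rfl | rfl | rfl
    · exact ⟨0, by simp⟩
    · exact ⟨r, hr⟩
    · exact ⟨s, hs⟩
  have ha : a ≠ 0 := by
    rintro rfl
    exact hcol_of b ⟨0, by simp⟩ ⟨1, by simp⟩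
  have hb : b ≠ 0 := by
    rintro rfl
    exact hcol_of a ⟨1, by simp⟩ ⟨0, by simp⟩
  have hd : d ≠ 0 := by
    intro hd0
    have hba : b = a := by rw [hd_def] at hd0; linear_combination hd0
    subst hba
    exact hcol_of b ⟨1, by simp⟩ ⟨1, by simp⟩
  clear_value d
  have hdn : d.re * d.re + d.im * d.im ≠ 0 := by
    have := Complex.normSq_pos.mpr hd
    simpa [Complex.normSq_apply] using this.ne'
  set t0 : ℝ := -(d.re * a.re + d.im * a.im) / (d.re * d.re + d.im * d.im) with ht0
  set z0 : ℂ := a + (t0 : ℂ) * d with hz0_def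
  clear_value z0
  have hz0 : z0 ≠ 0 := by
    intro h0
    apply hcol_of d
    · refine ⟨-t0, ?_⟩
      have : a = -(t0 : ℂ) * d := by rw [hz0_def] at h0; linear_combination h0
      rw [this]; push_cast [Complex.real_smul]; ring
    · refine ⟨1 - t0, ?_⟩
      have : a = -(t0 : ℂ) * d := by rw [hz0_def] at h0; linear_combination h0
      have hb' : b = a + d := by rw [hd_def]; ring
      rw [hb', this]; push_cast [Complex.real_smul]; ring
  have horth : ((starRingEnd ℂ) z0 * d).re = 0 := by
    have expand : (starRingEnd ℂ) z0 * d
        = (starRingEnd ℂ) a * d + (t0 : ℂ) * ((starRingEnd ℂ) d * d) := by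
      rw [hz0_def, map_add, map_mul, Complex.conj_ofReal]; ring
    rw [expand, Complex.add_re, Complex.re_ofReal_mul,
      ← Complex.normSq_eq_conj_mul_self, Complex.ofReal_re]
    have h1 : ((starRingEnd ℂ) a * d).re = a.re * d.re + a.im * d.im := by
      simp [Complex.mul_re]
    rw [h1, Complex.normSq_apply, ht0]
    rw [div_mul_cancel₀ _ hdn]
    ring
  have key : ∀ t : ℝ, ((starRingEnd ℂ) z0 * (a + (t : ℂ) * d)).re = Complex.normSq z0 := by
    intro t
    have hz : a + (t : ℂ) * d = z0 + ((t - t0 : ℝ) : ℂ) * d := by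
      rw [hz0_def]; push_cast; ring
    have hmc : (starRingEnd ℂ) z0 * (((t - t0 : ℝ) : ℂ) * d)
        = ((t - t0 : ℝ) : ℂ) * ((starRingEnd ℂ) z0 * d) := by ring
    rw [hz, mul_add, Complex.add_re, hmc, Complex.re_ofReal_mul, horth, mul_zero, add_zero,
      ← Complex.normSq_eq_conj_mul_self, Complex.ofReal_re]
  have hnpos : 0 < Complex.normSq z0 := Complex.normSq_pos.mpr hz0
  have hne : ∀ t : ℝ, a + (t : ℂ) * d ≠ 0 := by
    intro t h0
    have := key t
    rw [h0, mul_zero] at this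
    simp only [Complex.zero_re] at this
    exact hnpos.ne this
  set c : ℂ := (starRingEnd ℂ) z0 with hc_def
  have hc : c ≠ 0 := by simpa [hc_def] using hz0
  have hpos : ∀ t : ℝ, 0 < (c * (a + (t : ℂ) * d)).re := fun t => by
    rw [hc_def, key t]; exact hnpos
  have hderiv : ∀ t : ℝ, HasDerivAt (fun s : ℝ => Complex.log (c * (a + (s : ℂ) * d)))
      (d / (a + (t : ℂ) * d)) t := by
    intro t
    have h1 : HasDerivAt (fun s : ℝ => c * (a + (s : ℂ) * d)) (c * d) t := by
      have h2 : HasDerivAt (fun s : ℝ => (s : ℂ)) 1 t := Complex.ofRealCLM.hasDerivAt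
      have h3 := ((h2.mul_const d).const_add a).const_mul c
      simpa using h3
    have hmem : c * (a + (t : ℂ) * d) ∈ Complex.slitPlane :=
      Complex.mem_slitPlane_iff.mpr (Or.inl (hpos t))
    have h4 := (Complex.hasDerivAt_log hmem).comp t h1
    rw [mul_inv_rev, mul_assoc, inv_mul_cancel_left₀ hc, ← div_eq_inv_mul] at h4
    exact h4
  have hint : IntervalIntegrable (fun t : ℝ => d / (a + (t : ℂ) * d))
      MeasureTheory.volume 0 1 := by
    apply Continuous.intervalIntegrable
    exact continuous_const.div (by continuity) hne
  have hI : (∫ t in (0:ℝ)..1, d / (a + (t : ℂ) * d))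
      = Complex.log (c * (a + (1 : ℂ) * d)) - Complex.log (c * (a + (0 : ℂ) * d)) := by
    have := intervalIntegral.integral_eq_sub_of_hasDerivAt
      (f := fun s : ℝ => Complex.log (c * (a + (s : ℂ) * d)))
      (f' := fun t : ℝ => d / (a + (t : ℂ) * d))
      (fun t _ => hderiv t) hint
    simpa using this
  have hab : a + (1 : ℂ) * d = b := by rw [hd_def]; ring
  have haa : a + (0 : ℂ) * d = a := by ring
  rw [hab, haa] at hI
  have hcb : c * b ≠ 0 := mul_ne_zero hc hb
  have hca : c * a ≠ 0 := mul_ne_zero hc ha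
  have hexp : Complex.exp (Complex.log (c * b) - Complex.log (c * a))
      = Complex.exp (Complex.log b - Complex.log a) := by
    rw [Complex.exp_sub, Complex.exp_sub, Complex.exp_log hcb, Complex.exp_log hca,
      Complex.exp_log hb, Complex.exp_log ha]
    field_simp
  have hex := Complex.exp_eq_exp_iff_exists_int.mp hexp
  refine ⟨Complex.log (c * b) - Complex.log (c * a), hex.choose, hI, ?_, hex.choose_spec⟩
  -- imaginary part bound
  have harg : ∀ z : ℂ, 0 < (c * z).re → |(Complex.log (c * z)).im| < Real.pi / 2 := by
    intro z hz
    rw [Complex.log_im]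
    exact Complex.abs_arg_lt_pi_div_two_iff.mpr (Or.inl hz)
  have hb' : 0 < (c * b).re := by
    have h := hpos 1; rwa [show ((1:ℝ):ℂ) = 1 from Complex.ofReal_one, hab] at h
  have ha' : 0 < (c * a).re := by
    have h := hpos 0; rwa [show ((0:ℝ):ℂ) = 0 from Complex.ofReal_zero, haa] at h
  calc |(Complex.log (c * b) - Complex.log (c * a)).im|
      = |(Complex.log (c * b)).im - (Complex.log (c * a)).im| := by
        rw [Complex.sub_im]
    _ ≤ |(Complex.log (c * b)).im| + |(Complex.log (c * a)).im| := abs_sub _ _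
    _ < Real.pi / 2 + Real.pi / 2 := add_lt_add (harg b hb') (harg a ha')
    _ = Real.pi := by ring

/-- The winding number around `p` of a closed polygonal path with `n ≤ 4` sides, where
`p` does not lie on any of the lines containing the sides, is at most `1` in absolute
value. -/
theorem stmt_9 (n : ℕ) [NeZero n] (hn : n ≤ 4) (w : Fin n → ℂ) (p : ℂ)
    (hdist : ∀ j, w j ≠ w (j + 1))
    (hcol : ∀ j, ¬ Collinear ℝ ({p, w j, w (j + 1)} : Set ℂ)) :
    ‖(1 / (2 * Real.pi * Complex.I)) *
      ∑ j : Fin n, ∫ t in (0:ℝ)..1,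
        (w (j + 1) - w j) / ((w j + (t : ℂ) * (w (j + 1) - w j)) - p)‖ ≤ 1 := by
  -- translate non-collinearity
  have hcol' : ∀ j, ¬ Collinear ℝ ({0, w j - p, w (j + 1) - p} : Set ℂ) := by
    intro j hC
    apply hcol j
    obtain ⟨v, hv⟩ := (collinear_iff_of_mem
      (show (0:ℂ) ∈ ({0, w j - p, w (j+1) - p} : Set ℂ) by simp)).mp hC
    rw [collinear_iff_of_mem (show p ∈ ({p, w j, w (j+1)} : Set ℂ) by simp)]
    refine ⟨v, ?_⟩
    rintro q hq
    rcases hq with rfl | rfl | rfl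
    · exact ⟨0, by simp⟩
    · obtain ⟨r, hr⟩ := hv (w j - p) (by simp)
      refine ⟨r, ?_⟩
      simp only [vadd_eq_add] at hr ⊢
      linear_combination hr
    · obtain ⟨r, hr⟩ := hv (w (j+1) - p) (by simp)
      refine ⟨r, ?_⟩
      simp only [vadd_eq_add] at hr ⊢
      linear_combination hr
  choose L k hI him hrep using fun j => seg_key (w j - p) (w (j + 1) - p) (hcol' j)
  have hIj : ∀ j, (∫ t in (0:ℝ)..1,
      (w (j + 1) - w j) / ((w j + (t : ℂ) * (w (j + 1) - w j)) - p)) = L j := by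
    intro j
    rw [← hI j]
    apply intervalIntegral.integral_congr
    intro t _
    show (w (j + 1) - w j) / ((w j + (t : ℂ) * (w (j + 1) - w j)) - p)
        = ((w (j+1) - p) - (w j - p)) / ((w j - p) + (t : ℂ) * ((w (j+1) - p) - (w j - p)))
    have h2 : (w j + (t : ℂ) * (w (j + 1) - w j)) - p
        = (w j - p) + (t : ℂ) * ((w (j+1) - p) - (w j - p)) := by ring
    rw [h2]
    congr 1
    ring
  -- telescoping
  have htel : ∑ j : Fin n, (Complex.log (w (j + 1) - p) - Complex.log (w j - p)) = 0 := by
    rw [Finset.sum_sub_distrib]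
    have : ∑ j : Fin n, Complex.log (w (j + 1) - p) = ∑ j : Fin n, Complex.log (w j - p) :=
      Fintype.sum_equiv (Equiv.addRight (1 : Fin n)) _ _ (fun j => rfl)
    rw [this, sub_self]
  set K : ℤ := ∑ j : Fin n, k j with hK
  have hsum : ∑ j : Fin n, L j = (K : ℂ) * (2 * Real.pi * Complex.I) := by
    calc ∑ j : Fin n, L j
        = ∑ j : Fin n, ((Complex.log (w (j + 1) - p) - Complex.log (w j - p))
            + (k j : ℂ) * (2 * Real.pi * Complex.I)) := Finset.sum_congr rfl fun j _ => hrep j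
      _ = (∑ j : Fin n, (Complex.log (w (j + 1) - p) - Complex.log (w j - p)))
            + (∑ j : Fin n, (k j : ℂ)) * (2 * Real.pi * Complex.I) := by
          rw [Finset.sum_add_distrib, Finset.sum_mul]
      _ = (K : ℂ) * (2 * Real.pi * Complex.I) := by
          rw [htel, zero_add, hK]; push_cast; ring
  -- bound the imaginary part
  have hpi : 0 < Real.pi := Real.pi_pos
  have hne : (Finset.univ : Finset (Fin n)).Nonempty := Finset.univ_nonempty
  have him_sum : |(∑ j : Fin n, L j).im| < 4 * Real.pi := by
    rw [Complex.im_sum]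
    calc |∑ j : Fin n, (L j).im| ≤ ∑ j : Fin n, |(L j).im| :=
          Finset.abs_sum_le_sum_abs _ _
      _ < ∑ _j : Fin n, Real.pi := Finset.sum_lt_sum_of_nonempty hne fun j _ => him j
      _ = n * Real.pi := by
          rw [Finset.sum_const, Finset.card_univ, Fintype.card_fin, nsmul_eq_mul]
      _ ≤ 4 * Real.pi := by
          apply mul_le_mul_of_nonneg_right _ hpi.le
          exact_mod_cast hn
  have hKim : ((K : ℂ) * (2 * Real.pi * Complex.I)).im = (K : ℝ) * (2 * Real.pi) := by
    simp [Complex.mul_im]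
  rw [hsum, hKim] at him_sum
  have hKabs : |K| ≤ 1 := by
    have h2 : |(K : ℝ)| * (2 * Real.pi) < 4 * Real.pi := by
      calc |(K : ℝ)| * (2 * Real.pi) = |(K : ℝ) * (2 * Real.pi)| := by
            rw [abs_mul, abs_of_pos (show (0:ℝ) < 2 * Real.pi by positivity)]
        _ < 4 * Real.pi := him_sum
    have h3 : |(K : ℝ)| < 2 := by nlinarith
    have h5 : |K| < 2 := by exact_mod_cast h3
    omega
  -- conclude
  have h2pi : (2 * (Real.pi : ℂ) * Complex.I) ≠ 0 := by
    simp [Real.pi_ne_zero, Complex.I_ne_zero]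
  have hS : ∑ j : Fin n, (∫ t in (0:ℝ)..1,
      (w (j + 1) - w j) / ((w j + (t : ℂ) * (w (j + 1) - w j)) - p))
      = (K : ℂ) * (2 * Real.pi * Complex.I) := by
    rw [Finset.sum_congr rfl fun j _ => hIj j, hsum]
  rw [hS]
  have : (1 / (2 * (Real.pi : ℂ) * Complex.I)) * ((K : ℂ) * (2 * Real.pi * Complex.I))
      = (K : ℂ) := by
    field_simp
  rw [this, Complex.norm_intCast]
  exact_mod_cast hKabs
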